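/- Let 𝔅 be a bornology with closed base on a metric space X. If {𝒰ₙ : n ∈ ℕ} is a sequence of γ_{𝔅ˢ}-covers with 𝒰ₙ = {Uⱼⁿ : j ∈ ℕ}, then 𝒱ₙ = {U¹_k ∩ U²_k ∩ ⋯ ∩ Uⁿ_k : k ∈ ℕ} (diagonal intersections with the same index k) is a γ_{𝔅ˢ}-cover of X for each n. -/

import Mathlib

open Set Metric Filter

/-- A bornology on a metric space: an ideal of subsets covering `X`. -/
structure BornologyOn (X : Type*) [MetricSpace X] where
  sets : Set (Set X)
  union_mem : ∀ {A B : Set X}, A ∈ sets → B ∈ sets → A ∪ B ∈ sets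
  subset_mem : ∀ {A B : Set X}, A ∈ sets → B ⊆ A → B ∈ sets
  covers : ∀ x : X, ∃ A ∈ sets, x ∈ A

variable {X : Type*} [MetricSpace X]

/-- `𝔅` has a closed base: a cofinal subfamily consisting of closed sets. -/
def HasClosedBase (𝔅 : BornologyOn X) : Prop :=
  ∃ base ⊆ 𝔅.sets, (∀ C ∈ base, IsClosed C) ∧ ∀ A ∈ 𝔅.sets, ∃ C ∈ base, A ⊆ C

/-- The `δ`-enlargement `B^δ = ⋃_{x ∈ B} S(x, δ)`. -/
def enlarge (B : Set X) (δ : ℝ) : Set X := ⋃ x ∈ B, ball x δ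

/-- A `𝔅ˢ`-cover: `X ∉ 𝒰` and every `B ∈ 𝔅` has `B^δ ⊆ U` for some `U ∈ 𝒰`, `δ > 0`. -/
def IsBCover (𝔅 : BornologyOn X) (𝒰 : Set (Set X)) : Prop :=
  univ ∉ 𝒰 ∧ ∀ B ∈ 𝔅.sets, ∃ U ∈ 𝒰, ∃ δ > 0, enlarge B δ ⊆ U

/-- An open `𝔅ˢ`-cover. -/
def IsOpenBCover (𝔅 : BornologyOn X) (𝒰 : Set (Set X)) : Prop :=
  (∀ U ∈ 𝒰, IsOpen U) ∧ (∀ x : X, ∃ U ∈ 𝒰, x ∈ U) ∧ IsBCover 𝔅 𝒰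

/-- A `γ_{𝔅ˢ}`-cover (set form): infinite family of open sets such that for each `B ∈ 𝔅`
all but finitely many members contain some enlargement of `B`. -/
def IsGammaBCover (𝔅 : BornologyOn X) (𝒰 : Set (Set X)) : Prop :=
  𝒰.Infinite ∧ (∀ U ∈ 𝒰, IsOpen U) ∧
    ∀ B ∈ 𝔅.sets, {U ∈ 𝒰 | ¬ ∃ δ > 0, enlarge B δ ⊆ U}.Finite

/-- A `γ_{𝔅ˢ}`-cover given as a sequence `{Uₙ}`: infinite, open, and for each `B ∈ 𝔅`
there are `n₀` and `δₙ > 0` with `B^{δₙ} ⊆ Uₙ` for all `n ≥ n₀`. -/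
def IsGammaBSeq (𝔅 : BornologyOn X) (U : ℕ → Set X) : Prop :=
  (Set.range U).Infinite ∧ (∀ n, IsOpen (U n)) ∧
    ∀ B ∈ 𝔅.sets, ∃ n₀, ∀ n ≥ n₀, ∃ δ > 0, enlarge B δ ⊆ U n

/-- A `γ`-cover: infinite family of open sets, every point in all but finitely many members. -/
def IsGammaCover (𝒰 : Set (Set X)) : Prop :=
  𝒰.Infinite ∧ (∀ U ∈ 𝒰, IsOpen U) ∧ ∀ x : X, {U ∈ 𝒰 | x ∉ U}.Finite

/-- An open cover of `X`. -/
def IsOpenCover (𝒰 : Set (Set X)) : Prop :=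
  (∀ U ∈ 𝒰, IsOpen U) ∧ ∀ x : X, ∃ U ∈ 𝒰, x ∈ U

/-- The family `𝒪_{𝔅ˢ}` of countable open `𝔅ˢ`-covers. -/
def OBs (𝔅 : BornologyOn X) : Set (Set (Set X)) :=
  {𝒰 | 𝒰.Countable ∧ IsOpenBCover 𝔅 𝒰}

/-- The family `Γ_{𝔅ˢ}` of countable `γ_{𝔅ˢ}`-covers. -/
def GBs (𝔅 : BornologyOn X) : Set (Set (Set X)) :=
  {𝒰 | 𝒰.Countable ∧ IsGammaBCover 𝔅 𝒰}

/-- The family `𝒪` of countable open covers. -/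
def Ocov (X : Type*) [MetricSpace X] : Set (Set (Set X)) :=
  {𝒰 | 𝒰.Countable ∧ IsOpenCover 𝒰}

/-- The selection principle `S₁(𝒜, ℬ)`. -/
def S1 (𝒜 ℬ : Set (Set (Set X))) : Prop :=
  ∀ 𝒰 : ℕ → Set (Set X), (∀ n, 𝒰 n ∈ 𝒜) →
    ∃ sel : ℕ → Set X, (∀ n, sel n ∈ 𝒰 n) ∧ Set.range sel ∈ ℬ

/-- The selection principle `S_fin(𝒜, ℬ)`. -/
def Sfin (𝒜 ℬ : Set (Set (Set X))) : Prop :=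
  ∀ 𝒰 : ℕ → Set (Set X), (∀ n, 𝒰 n ∈ 𝒜) →
    ∃ 𝒱 : ℕ → Set (Set X), (∀ n, 𝒱 n ⊆ 𝒰 n ∧ (𝒱 n).Finite) ∧ (⋃ n, 𝒱 n) ∈ ℬ

/-- The selection principle `U_fin(𝒜, ℬ)`. -/
def Ufin (𝒜 ℬ : Set (Set (Set X))) : Prop :=
  ∀ 𝒰 : ℕ → Set (Set X), (∀ n, 𝒰 n ∈ 𝒜) →
    ∃ 𝒱 : ℕ → Set (Set X), (∀ n, 𝒱 n ⊆ 𝒰 n ∧ (𝒱 n).Finite) ∧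
      ((Set.range fun n => ⋃₀ 𝒱 n) ∈ ℬ ∨ ∃ n, ⋃₀ 𝒱 n = univ)

/-- ONE has a winning strategy in `G₁(𝒜, ℬ)`. -/
def OneWinsG1 (𝒜 ℬ : Set (Set (Set X))) : Prop :=
  ∃ σ : List (Set X) → Set (Set X),
    (∀ h, σ h ∈ 𝒜) ∧
    ∀ play : ℕ → Set X,
      (∀ n, play n ∈ σ (List.ofFn fun i : Fin n => play i.1)) →
      Set.range play ∉ ℬ

/-- ONE has a winning strategy in `G_fin(𝒜, ℬ)`. -/
def OneWinsGfin (𝒜 ℬ : Set (Set (Set X))) : Prop :=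
  ∃ σ : List (Set (Set X)) → Set (Set X),
    (∀ h, σ h ∈ 𝒜) ∧
    ∀ play : ℕ → Set (Set X),
      (∀ n, play n ⊆ σ (List.ofFn fun i : Fin n => play i.1) ∧ (play n).Finite) →
      (⋃ n, play n) ∉ ℬ

/-- The winning condition in the `𝔅ˢ`-Hurewicz game / property: every `B ∈ 𝔅` is
eventually `δ`-enlarged into some member of `𝒱ₙ`. -/
def HurSel (𝔅 : BornologyOn X) (𝒱 : ℕ → Set (Set X)) : Prop :=
  ∀ B ∈ 𝔅.sets, ∃ n₀, ∀ n ≥ n₀, ∃ δ > 0, ∃ U ∈ 𝒱 n, enlarge B δ ⊆ U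

/-- The strong `𝔅`-Hurewicz property. -/
def BsHurewicz (𝔅 : BornologyOn X) : Prop :=
  ∀ 𝒰 : ℕ → Set (Set X), (∀ n, 𝒰 n ∈ OBs 𝔅) →
    ∃ 𝒱 : ℕ → Set (Set X), (∀ n, 𝒱 n ⊆ 𝒰 n ∧ (𝒱 n).Finite) ∧ HurSel 𝔅 𝒱

/-- ONE has a winning strategy in the `𝔅ˢ`-Hurewicz game. -/
def OneWinsHurewicz (𝔅 : BornologyOn X) : Prop :=
  ∃ σ : List (Set (Set X)) → Set (Set X),
    (∀ h, σ h ∈ OBs 𝔅) ∧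
    ∀ play : ℕ → Set (Set X),
      (∀ n, play n ⊆ σ (List.ofFn fun i : Fin n => play i.1) ∧ (play n).Finite) →
      ¬ HurSel 𝔅 play

/-- A `𝔅ˢ`-groupable cover. -/
def BsGroupable (𝔅 : BornologyOn X) (𝒰 : Set (Set X)) : Prop :=
  ∃ 𝒢 : ℕ → Set (Set X), (∀ n, (𝒢 n).Finite) ∧
    (∀ m n, m ≠ n → Disjoint (𝒢 m) (𝒢 n)) ∧ (⋃ n, 𝒢 n) = 𝒰 ∧ HurSel 𝔅 𝒢

/-- The family `𝒪_{𝔅ˢ}^{gp}` of `𝔅ˢ`-groupable open covers. -/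
def OBsgp (𝔅 : BornologyOn X) : Set (Set (Set X)) :=
  {𝒰 | IsOpenCover 𝒰 ∧ BsGroupable 𝔅 𝒰}

/-- The basic `τ_𝔅ˢ` neighbourhood `[B, ε]ˢ(f)` in `C(X)`. -/
def sball (f : C(X, ℝ)) (B : Set X) (ε : ℝ) : Set C(X, ℝ) :=
  {g | ∃ δ > 0, ∀ x ∈ enlarge B δ, |f x - g x| < ε}

/-- The topology `τ_𝔅ˢ` of strong uniform convergence on `𝔅` on `C(X)`. -/
def tauBs (𝔅 : BornologyOn X) : TopologicalSpace C(X, ℝ) :=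
  TopologicalSpace.generateFrom
    {S | ∃ f : C(X, ℝ), ∃ B ∈ 𝔅.sets, ∃ ε > 0, S = sball f B ε}

/-- Countable `T`-tightness of a topological space. -/
def CountableTTightness {Y : Type*} (t : TopologicalSpace Y) : Prop :=
  ∀ ρ : Cardinal.{0}, ρ.IsRegular → Cardinal.aleph0 < ρ →
    ∀ A : Ordinal.{0} → Set Y, (∀ α β, α ≤ β → A α ⊆ A β) →
      (∀ α, α < ρ.ord → @IsClosed _ t (A α)) →
      @IsClosed _ t (⋃ α ∈ {α | α < ρ.ord}, A α)

theorem stmt4 (𝔅 : BornologyOn X) (hcb : HasClosedBase 𝔅)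
    (U : ℕ → ℕ → Set X) (hU : ∀ n, IsGammaBSeq 𝔅 (U n)) :
    ∀ n : ℕ, IsGammaBSeq 𝔅 (fun k => ⋂ i : Fin (n + 1), U i.1 k) := by
  intro n
  set V : ℕ → Set X := fun k => ⋂ i : Fin (n + 1), U i.1 k with hVdef
  refine ⟨?_, ?_, ?_⟩
  · -- range V is infinite
    by_contra hfin
    rw [Set.not_infinite] at hfin
    by_cases hS : {k | V k ≠ univ}.Infinite
    · obtain ⟨W, hWmem, hWinf⟩ : ∃ W ∈ Set.range V \ {univ}, (V ⁻¹' {W}).Infinite := by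
        by_contra h
        push_neg at h
        have hsub : {k | V k ≠ univ} ⊆ ⋃ W ∈ Set.range V \ {univ}, V ⁻¹' {W} := by
          intro k hk
          exact Set.mem_biUnion ⟨⟨k, rfl⟩, hk⟩ rfl
        exact hS (((hfin.diff (t := {univ})).biUnion
          (fun W hW => h W hW)).subset hsub)
      obtain ⟨x, hx⟩ := (Set.ne_univ_iff_exists_notMem W).mp hWmem.2
      obtain ⟨A, hA, hxA⟩ := 𝔅.covers x
      have hx𝔅 : {x} ∈ 𝔅.sets := 𝔅.subset_mem hA (Set.singleton_subset_iff.mpr hxA)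
      choose n₀ hn₀ using fun i : Fin (n + 1) => (hU i.1).2.2 {x} hx𝔅
      obtain ⟨k, hkW, hkN⟩ := hWinf.exists_gt (Finset.univ.sup n₀)
      have hxk : x ∈ V k := by
        refine Set.mem_iInter.mpr fun i => ?_
        obtain ⟨δ, hδ, hsub⟩ := hn₀ i k
          (le_of_lt (lt_of_le_of_lt (Finset.le_sup (Finset.mem_univ i)) hkN))
        exact hsub (Set.mem_biUnion rfl (mem_ball_self hδ))
      rw [Set.mem_preimage, Set.mem_singleton_iff] at hkW
      exact hx (hkW ▸ hxk)
    · rw [Set.not_infinite] at hS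
      apply (hU 0).1
      have : Set.range (U 0) ⊆ insert univ (U 0 '' {k | V k ≠ univ}) := by
        rintro _ ⟨k, rfl⟩
        by_cases hk : V k = univ
        · left
          have : V k ⊆ U 0 k := Set.iInter_subset _ (⟨0, Nat.succ_pos n⟩ : Fin (n + 1))
          exact Set.eq_univ_of_univ_subset (hk ▸ this)
        · exact Set.mem_insert_iff.mpr (Or.inr ⟨k, hk, rfl⟩)
      exact ((hS.image (U 0)).insert univ).subset this
  · intro k
    exact isOpen_iInter_of_finite fun i => (hU i.1).2.1 k
  · intro B hB
    choose n₀ hn₀ using fun i : Fin (n + 1) => (hU i.1).2.2 B hB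
    refine ⟨Finset.univ.sup n₀, fun k hk => ?_⟩
    choose δ hδpos hδ using fun i : Fin (n + 1) =>
      hn₀ i k (le_trans (Finset.le_sup (Finset.mem_univ i)) hk)
    refine ⟨Finset.univ.inf' ⟨⟨0, Nat.succ_pos n⟩, Finset.mem_univ _⟩ δ, ?_, ?_⟩
    · obtain ⟨i, _, hi⟩ := Finset.exists_mem_eq_inf' ⟨⟨0, Nat.succ_pos n⟩, Finset.mem_univ _⟩ δ
      exact hi ▸ hδpos i
    · refine Set.subset_iInter fun i => subset_trans ?_ (hδ i)
      refine Set.iUnion₂_mono fun y hy => ball_subset_ball ?_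
      exact Finset.inf'_le δ (Finset.mem_univ i)
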